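/- Let φ be a perfect IFG_N-formula over σ (every slash set occurring in φ is ∅) and 𝔄 a σ-structure with universe A. Then for every valuation a ∈ ^N A, exactly one of 𝔄 ⊨⁺ φ[{a}] and 𝔄 ⊨⁻ φ[{a}] holds (perfect formulas are determined on singleton teams). -/
import Mathlib


open FirstOrder

/-- A team: a set of valuations `Fin N → A`. -/
abbrev Team (A : Type*) (N : ℕ) := Set (Fin N → A)

/-- A pair of collections of teams. -/
abbrev TPair (A : Type*) (N : ℕ) := Set (Team A N) × Set (Team A N)

/-- A suit: a nonempty collection of teams closed under subsets. -/
def IsSuit {A : Type*} {N : ℕ} (S : Set (Team A N)) : Prop :=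
  S.Nonempty ∧ ∀ ⦃V V' : Team A N⦄, V ∈ S → V' ⊆ V → V' ∈ S

/-- A double suit: a pair of suits whose intersection is `{∅}`. -/
def IsDoubleSuit {A : Type*} {N : ℕ} (X : TPair A N) : Prop :=
  IsSuit X.1 ∧ IsSuit X.2 ∧ X.1 ∩ X.2 = {∅}

/-- The pair `(𝒫(V), 𝒫(^N A \ V))`. -/
def perfPair {A : Type*} {N : ℕ} (V : Team A N) : TPair A N :=
  (Set.powerset V, Set.powerset Vᶜ)

/-- `a ≈_J b` : the valuations `a` and `b` agree outside of `J`. -/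
def AgreeOutside {A : Type*} {N : ℕ} (J : Set (Fin N)) (a b : Fin N → A) : Prop :=
  ∀ i ∉ J, a i = b i

/-- `V = V₁ ∪_J V₂` : `V₁, V₂` form a `J`-saturated disjoint cover of `V`. -/
def CovJ {A : Type*} {N : ℕ} (J : Set (Fin N)) (V V₁ V₂ : Team A N) : Prop :=
  Disjoint V₁ V₂ ∧ V₁ ∪ V₂ = V ∧
  (∀ a ∈ V₁, ∀ b ∈ V, AgreeOutside J a b → b ∈ V₁) ∧
  (∀ a ∈ V₂, ∀ b ∈ V, AgreeOutside J a b → b ∈ V₂)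

/-- `f` is independent of `J` on `V`. -/
def IndepOn {A : Type*} {N : ℕ} (J : Set (Fin N)) (V : Team A N)
    (f : (Fin N → A) → A) : Prop :=
  ∀ a ∈ V, ∀ b ∈ V, AgreeOutside J a b → f a = f b

/-- The `n`-variation of `V` by `f`: `V(n:f) = {a(n:f(a)) : a ∈ V}`. -/
def varF {A : Type*} {N : ℕ} (V : Team A N) (n : Fin N) (f : (Fin N → A) → A) : Team A N :=
  (fun a => Function.update a n (f a)) '' V

/-- `V(n:A) = {a(n:b) : a ∈ V, b ∈ A}`. -/
def varAll {A : Type*} {N : ℕ} (V : Team A N) (n : Fin N) : Team A N :=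
  {c | ∃ a ∈ V, ∃ b : A, c = Function.update a n b}

/-- IFG_N-formulas over the signature `L`: atomic first-order formulas
(equalities and relations between terms in the variables `v_0, …, v_{N-1}`),
closed under `∼ψ`, `ψ₁ ∨_J ψ₂`, and `∃v_n/J ψ`. -/
inductive IFG (L : Language) (N : ℕ) : Type _
  | equal (t₁ t₂ : L.Term (Fin N)) : IFG L N
  | rel {k : ℕ} (R : L.Relations k) (ts : Fin k → L.Term (Fin N)) : IFG L N
  | not (φ : IFG L N) : IFG L N
  | or (J : Set (Fin N)) (φ₁ φ₂ : IFG L N) : IFG L N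
  | ex (n : Fin N) (J : Set (Fin N)) (φ : IFG L N) : IFG L N

/-- Hodges' trump semantics: `Sat A φ true V` means `𝔄 ⊨⁺ φ[V]` (`V` is a trump),
and `Sat A φ false W` means `𝔄 ⊨⁻ φ[W]` (`W` is a cotrump). -/
def Sat {L : Language} {N : ℕ} (A : Type*) [L.Structure A] :
    IFG L N → Bool → Team A N → Prop
  | .equal t₁ t₂, true, V => ∀ a ∈ V, t₁.realize a = t₂.realize a
  | .equal t₁ t₂, false, W => ∀ a ∈ W, t₁.realize a ≠ t₂.realize a
  | .rel R ts, true, V => ∀ a ∈ V, Language.Structure.RelMap R (fun i => (ts i).realize a)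
  | .rel R ts, false, W => ∀ a ∈ W, ¬ Language.Structure.RelMap R (fun i => (ts i).realize a)
  | .not φ, b, V => Sat A φ (!b) V
  | .or J φ₁ φ₂, true, V =>
      ∃ V₁ V₂, CovJ J V V₁ V₂ ∧ Sat A φ₁ true V₁ ∧ Sat A φ₂ true V₂
  | .or _ φ₁ φ₂, false, W => Sat A φ₁ false W ∧ Sat A φ₂ false W
  | .ex n J φ, true, V =>
      ∃ f : (Fin N → A) → A, IndepOn J V f ∧ Sat A φ true (varF V n f)
  | .ex n _ φ, false, W => Sat A φ false (varAll W n)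

/-- The meaning `‖φ‖_𝔄 = ({V : 𝔄 ⊨⁺ φ[V]}, {W : 𝔄 ⊨⁻ φ[W]})`. -/
def meaning {L : Language} {N : ℕ} (A : Type*) [L.Structure A] (φ : IFG L N) :
    TPair A N :=
  ({V | Sat A φ true V}, {W | Sat A φ false W})

/-- An IFG-formula is perfect if all of its slash sets are empty. -/
def IFG.Perfect {L : Language} {N : ℕ} : IFG L N → Prop
  | .equal _ _ => True
  | .rel _ _ => True
  | .not φ => φ.Perfect
  | .or J φ₁ φ₂ => J = ∅ ∧ φ₁.Perfect ∧ φ₂.Perfect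
  | .ex _ J φ => J = ∅ ∧ φ.Perfect

/-- The perfection `φ_∅` of `φ`: replace every slash set by `∅`. -/
def IFG.perfection {L : Language} {N : ℕ} : IFG L N → IFG L N
  | .equal t₁ t₂ => .equal t₁ t₂
  | .rel R ts => .rel R ts
  | .not φ => .not φ.perfection
  | .or _ φ₁ φ₂ => .or ∅ φ₁.perfection φ₂.perfection
  | .ex n _ φ => .ex n ∅ φ.perfection

/-- Classical Tarski semantics (ignoring slash sets). -/
def TarskiSat {L : Language} {N : ℕ} (A : Type*) [L.Structure A] :
    IFG L N → (Fin N → A) → Prop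
  | .equal t₁ t₂, a => t₁.realize a = t₂.realize a
  | .rel R ts, a => Language.Structure.RelMap R (fun i => (ts i).realize a)
  | .not φ, a => ¬ TarskiSat A φ a
  | .or _ φ₁ φ₂, a => TarskiSat A φ₁ a ∨ TarskiSat A φ₂ a
  | .ex n _ φ, a => ∃ b : A, TarskiSat A φ (Function.update a n b)

lemma agreeOutside_empty {A : Type*} {N : ℕ} {a b : Fin N → A}
    (h : AgreeOutside ∅ a b) : a = b :=
  funext fun i => h i (Set.notMem_empty i)

/-- Flatness of perfect formulas. -/
theorem perfect_flat {L : Language} {N : ℕ} (A : Type*) [L.Structure A]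
    (φ : IFG L N) (hφ : φ.Perfect) (V : Team A N) :
    (Sat A φ true V ↔ ∀ a ∈ V, TarskiSat A φ a) ∧
    (Sat A φ false V ↔ ∀ a ∈ V, ¬ TarskiSat A φ a) := by
  induction φ generalizing V with
  | equal t₁ t₂ => exact ⟨Iff.rfl, Iff.rfl⟩
  | rel R ts => exact ⟨Iff.rfl, Iff.rfl⟩
  | not ψ ih =>
    obtain ⟨h1, h2⟩ := ih hφ V
    exact ⟨h2, by simpa [Sat, TarskiSat, not_not] using h1⟩
  | or J φ₁ φ₂ ih₁ ih₂ =>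
    obtain ⟨hJ, h1, h2⟩ := hφ
    subst hJ
    constructor
    · constructor
      · rintro ⟨V₁, V₂, ⟨hdis, hun, -, -⟩, s₁, s₂⟩ a ha
        rw [← hun] at ha
        rcases ha with ha | ha
        · exact Or.inl (((ih₁ h1 V₁).1.mp s₁) a ha)
        · exact Or.inr (((ih₂ h2 V₂).1.mp s₂) a ha)
      · intro h
        refine ⟨{a ∈ V | TarskiSat A φ₁ a}, {a ∈ V | ¬ TarskiSat A φ₁ a},
          ⟨?_, ?_, ?_, ?_⟩, ?_, ?_⟩
        · rw [Set.disjoint_left]; rintro a ⟨-, ha⟩ ⟨-, ha'⟩; exact ha' ha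
        · ext a
          constructor
          · rintro (⟨h, -⟩ | ⟨h, -⟩) <;> exact h
          · intro ha; by_cases h' : TarskiSat A φ₁ a
            · exact Or.inl ⟨ha, h'⟩
            · exact Or.inr ⟨ha, h'⟩
        · rintro a ⟨-, ha⟩ b hb hab; exact ⟨hb, agreeOutside_empty hab ▸ ha⟩
        · rintro a ⟨-, ha⟩ b hb hab; exact ⟨hb, agreeOutside_empty hab ▸ ha⟩
        · exact (ih₁ h1 _).1.mpr fun a ha => ha.2
        · exact (ih₂ h2 _).1.mpr fun a ha =>
            (h a ha.1).resolve_left ha.2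
    · constructor
      · rintro ⟨s₁, s₂⟩ a ha
        rintro (h | h)
        · exact ((ih₁ h1 V).2.mp s₁) a ha h
        · exact ((ih₂ h2 V).2.mp s₂) a ha h
      · intro h
        exact ⟨(ih₁ h1 V).2.mpr fun a ha h' => h a ha (Or.inl h'),
          (ih₂ h2 V).2.mpr fun a ha h' => h a ha (Or.inr h')⟩
  | ex n J ψ ih =>
    obtain ⟨hJ, h1⟩ := hφ
    subst hJ
    constructor
    · constructor
      · rintro ⟨f, -, hs⟩ a ha
        exact ⟨f a, ((ih h1 _).1.mp hs) _ ⟨a, ha, rfl⟩⟩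
      · intro h
        classical
        refine ⟨fun a => if h' : ∃ b : A, TarskiSat A ψ (Function.update a n b)
            then h'.choose else a n, ?_, ?_⟩
        · intro a ha b hb hab; rw [agreeOutside_empty hab]
        · refine (ih h1 _).1.mpr ?_
          rintro c ⟨a, ha, rfl⟩
          have h'' : ∃ b : A, TarskiSat A ψ (Function.update a n b) := h a ha
          simp only [dif_pos h'']
          exact h''.choose_spec
    · constructor
      · intro hs a ha ⟨b, hb⟩
        exact ((ih h1 _).2.mp hs) _ ⟨a, ha, b, rfl⟩ hb
      · intro h
        refine (ih h1 _).2.mpr ?_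
        rintro c ⟨a, ha, b, rfl⟩ hb
        exact h a ha ⟨b, hb⟩

/-- Perfect formulas are determined on singleton teams: for each valuation `a`,
exactly one of `𝔄 ⊨⁺ φ[{a}]` and `𝔄 ⊨⁻ φ[{a}]` holds. -/
theorem perfect_determined {L : Language} {N : ℕ} (A : Type*) [L.Structure A]
    (φ : IFG L N) (hφ : φ.Perfect) (a : Fin N → A) :
    Xor' (Sat A φ true {a}) (Sat A φ false {a}) := by
  have h := perfect_flat A φ hφ {a}
  by_cases ht : TarskiSat A φ a
  · exact Or.inl ⟨h.1.mpr (by rintro b rfl; exact ht),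
      fun hf => (h.2.mp hf) a rfl ht⟩
  · exact Or.inr ⟨h.2.mpr (by rintro b rfl; exact ht),
      fun hf => ht ((h.1.mp hf) a rfl)⟩
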